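/- Let T > 1. Every classical solution u of the one-dimensional wave equation on [0,T]×[−1,1] with Dirichlet boundary conditions whose initial data are supported in [−1/4,1/4] and which satisfies ∂ₜu(t,x) = 0 for all t ∈ (0,T) and all x ∈ ω = (−1,−3/4) ∪ (3/4,1) vanishes identically on [0,T]×[−1,1]. -/

import Mathlib

open MeasureTheory
open Set Filter Topology


lemma const_of_deriv0 {f : ℝ → ℝ} {a b : ℝ} (hab : a ≤ b)
    (hf : ∀ s ∈ Set.Icc a b, HasDerivAt f 0 s) : f b = f a := by
  rcases eq_or_lt_of_le hab with h | h
  · rw [h]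
  · obtain ⟨c, hc, hceq⟩ := exists_hasDerivAt_eq_slope f (fun _ => 0) h
      (fun s hs => ((hf s hs).continuousAt).continuousWithinAt)
      (fun s hs => hf s (Set.Ioo_subset_Icc_self hs))
    have hb : b - a ≠ 0 := sub_ne_zero.2 h.ne'
    have := hceq.symm
    rw [div_eq_iff hb] at this
    linarith

lemma lim_right {f : ℝ → ℝ} {s : Set ℝ} {a b L : ℝ} (hab : a < b) (hsub : Set.Ioo a b ⊆ s)
    (hc : ContinuousWithinAt f s a) (hconst : ∀ x ∈ Set.Ioo a b, f x = L) : f a = L := by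
  haveI : (𝓝[Set.Ioo a b] a).NeBot := by
    rw [← mem_closure_iff_nhdsWithin_neBot, closure_Ioo hab.ne]
    exact ⟨le_refl a, hab.le⟩
  have h1 : Tendsto f (𝓝[Set.Ioo a b] a) (𝓝 (f a)) := hc.mono hsub
  have h2 : Tendsto f (𝓝[Set.Ioo a b] a) (𝓝 L) := by
    refine tendsto_const_nhds.congr' ?_
    filter_upwards [self_mem_nhdsWithin] with x hx
    exact (hconst x hx).symm
  exact tendsto_nhds_unique h1 h2

lemma lim_left {f : ℝ → ℝ} {s : Set ℝ} {a b L : ℝ} (hab : a < b) (hsub : Set.Ioo a b ⊆ s)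
    (hc : ContinuousWithinAt f s b) (hconst : ∀ x ∈ Set.Ioo a b, f x = L) : f b = L := by
  haveI : (𝓝[Set.Ioo a b] b).NeBot := by
    rw [← mem_closure_iff_nhdsWithin_neBot, closure_Ioo hab.ne]
    exact ⟨hab.le, le_refl b⟩
  have h1 : Tendsto f (𝓝[Set.Ioo a b] b) (𝓝 (f b)) := hc.mono hsub
  have h2 : Tendsto f (𝓝[Set.Ioo a b] b) (𝓝 L) := by
    refine tendsto_const_nhds.congr' ?_
    filter_upwards [self_mem_nhdsWithin] with x hx
    exact (hconst x hx).symm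
  exact tendsto_nhds_unique h1 h2


/-- Partial derivative in time of a function of (time, space). -/
noncomputable def pdt (u : ℝ → ℝ → ℝ) : ℝ → ℝ → ℝ := fun t x => deriv (fun s => u s x) t

/-- Partial derivative in space of a function of (time, space). -/
noncomputable def pdx (u : ℝ → ℝ → ℝ) : ℝ → ℝ → ℝ := fun t x => deriv (fun y => u t y) x

set_option maxHeartbeats 2000000 in
theorem unique_continuation_1d_localized (T : ℝ) (hT : 1 < T) (u : ℝ → ℝ → ℝ)
    -- u is of class C² on [0,T] × [−1,1]
    (hreg : ContDiffOn ℝ 2 (Function.uncurry u) (Set.Icc 0 T ×ˢ Set.Icc (-1 : ℝ) 1))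
    -- u solves the wave equation on [0,T] × [−1,1]
    (hwave : ∀ t ∈ Set.Icc (0 : ℝ) T, ∀ x ∈ Set.Icc (-1 : ℝ) 1,
      pdt (pdt u) t x = pdx (pdx u) t x)
    -- Dirichlet boundary conditions
    (hbdry : ∀ t ∈ Set.Icc (0 : ℝ) T, u t (-1) = 0 ∧ u t 1 = 0)
    -- initial data supported in [−1/4, 1/4]
    (hsupp : ∀ x : ℝ, 1 / 4 ≤ |x| → |x| ≤ 1 → u 0 x = 0 ∧ pdt u 0 x = 0)
    -- ∂ₜ u vanishes on the observation set (0,T) × ω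
    (hobs : ∀ t ∈ Set.Ioo (0 : ℝ) T,
      ∀ x ∈ (Set.Ioo (-1 : ℝ) (-3 / 4) ∪ Set.Ioo (3 / 4 : ℝ) 1), pdt u t x = 0) :
    ∀ t ∈ Set.Icc (0 : ℝ) T, ∀ x ∈ Set.Icc (-1 : ℝ) 1, u t x = 0 := by
  have hT0 : (0:ℝ) < T := by linarith
  set R : Set (ℝ × ℝ) := Set.Icc 0 T ×ˢ Set.Icc (-1 : ℝ) 1 with hR
  set O : Set (ℝ × ℝ) := Set.Ioo 0 T ×ˢ Set.Ioo (-1 : ℝ) 1 with hO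
  have hOopen : IsOpen O := isOpen_Ioo.prod isOpen_Ioo
  have hOR : O ⊆ R := Set.prod_mono Set.Ioo_subset_Icc_self Set.Ioo_subset_Icc_self
  set φ : ℝ × ℝ → (ℝ × ℝ) →L[ℝ] ℝ := fderiv ℝ (Function.uncurry u) with hφ
  set ψ : ℝ × ℝ → (ℝ × ℝ) →L[ℝ] ℝ := fderivWithin ℝ (Function.uncurry u) R with hψ
  have hmemO : ∀ t x : ℝ, 0 < t → t < T → -1 < x → x < 1 → ((t, x) : ℝ × ℝ) ∈ O :=
    fun t x h1 h2 h3 h4 => ⟨⟨h1, h2⟩, ⟨h3, h4⟩⟩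
  have hnhds : ∀ z ∈ O, R ∈ 𝓝 z := fun z hz =>
    Filter.mem_of_superset (hOopen.mem_nhds hz) hOR
  have hCAt : ∀ z ∈ O, ContDiffAt ℝ 2 (Function.uncurry u) z :=
    fun z hz => hreg.contDiffAt (hnhds z hz)
  have hdiff : ∀ z ∈ O, HasFDerivAt (Function.uncurry u) (φ z) z := fun z hz =>
    ((hCAt z hz).differentiableAt (by norm_num)).hasFDerivAt
  have hCφ : ∀ z ∈ O, ContDiffAt ℝ 1 φ z := fun z hz =>
    (hCAt z hz).fderiv_right (by norm_num)
  have hdφ : ∀ z ∈ O, HasFDerivAt φ (fderiv ℝ φ z) z := fun z hz =>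
    ((hCφ z hz).differentiableAt (by norm_num)).hasFDerivAt
  -- first-order partials at interior points
  have hpdtD : ∀ t x : ℝ, (t, x) ∈ O → HasDerivAt (fun s => u s x) (φ (t, x) (1, 0)) t := by
    intro t x hz
    have hγ : HasDerivAt (fun s : ℝ => ((s, x) : ℝ × ℝ)) ((1 : ℝ), (0 : ℝ)) t :=
      (hasDerivAt_id t).prodMk (hasDerivAt_const t x)
    exact (hdiff (t, x) hz).comp_hasDerivAt t hγ
  have hpdxD : ∀ t x : ℝ, (t, x) ∈ O → HasDerivAt (fun y => u t y) (φ (t, x) (0, 1)) x := by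
    intro t x hz
    have hγ : HasDerivAt (fun y : ℝ => ((t, y) : ℝ × ℝ)) ((0 : ℝ), (1 : ℝ)) x :=
      (hasDerivAt_const x t).prodMk (hasDerivAt_id x)
    exact (hdiff (t, x) hz).comp_hasDerivAt x hγ
  have hpdt_eq : ∀ t x : ℝ, (t, x) ∈ O → pdt u t x = φ (t, x) (1, 0) :=
    fun t x hz => (hpdtD t x hz).deriv
  have hpdx_eq : ∀ t x : ℝ, (t, x) ∈ O → pdx u t x = φ (t, x) (0, 1) :=
    fun t x hz => (hpdxD t x hz).deriv
  -- derivative of φ applied to fixed vector along a curve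
  have hkey : ∀ z ∈ O, ∀ (v : ℝ × ℝ) (γ : ℝ → ℝ × ℝ) (t₀ : ℝ) (d : ℝ × ℝ), γ t₀ = z →
      HasDerivAt γ d t₀ → HasDerivAt (fun s => φ (γ s) v) (fderiv ℝ φ z d v) t₀ := by
    intro z hz v γ t₀ d hγz hγ
    have h2 : HasDerivAt (fun s => φ (γ s)) (fderiv ℝ φ z d) t₀ := by
      subst hγz
      exact (hdφ (γ t₀) hz).comp_hasDerivAt t₀ hγ
    have h3 := (ContinuousLinearMap.apply ℝ ℝ v).hasFDerivAt.comp_hasDerivAt t₀ h2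
    exact h3
  -- symmetry of second derivative
  have hsymm : ∀ z ∈ O, ∀ v w : ℝ × ℝ, fderiv ℝ φ z v w = fderiv ℝ φ z w v := by
    intro z hz v w
    refine second_derivative_symmetric_of_eventually (f := Function.uncurry u) ?_ (hdφ z hz) v w
    filter_upwards [hOopen.mem_nhds hz] with y hy
    exact hdiff y hy
  -- the wave equation in terms of the second fderiv
  have hwave' : ∀ t x : ℝ, (t, x) ∈ O →
      fderiv ℝ φ (t, x) (1, 0) (1, 0) = fderiv ℝ φ (t, x) (0, 1) (0, 1) := by
    intro t x hz
    have hO1 : {s : ℝ | ((s, x) : ℝ × ℝ) ∈ O} ∈ 𝓝 t := by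
      have hco : Continuous fun s : ℝ => ((s, x) : ℝ × ℝ) :=
        continuous_id.prodMk continuous_const
      exact (hOopen.preimage hco).mem_nhds hz
    have hO2 : {y : ℝ | ((t, y) : ℝ × ℝ) ∈ O} ∈ 𝓝 x := by
      have hco : Continuous fun y : ℝ => ((t, y) : ℝ × ℝ) :=
        continuous_const.prodMk continuous_id
      exact (hOopen.preimage hco).mem_nhds hz
    have e1 : pdt (pdt u) t x = fderiv ℝ φ (t, x) (1, 0) (1, 0) := by
      have hev : (fun s => pdt u s x) =ᶠ[𝓝 t] (fun s => φ (s, x) (1, 0)) := by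
        filter_upwards [hO1] with s hs
        exact hpdt_eq s x hs
      have hd : HasDerivAt (fun s => φ (s, x) (1, 0)) (fderiv ℝ φ (t, x) (1, 0) (1, 0)) t :=
        hkey (t, x) hz (1, 0) (fun s => (s, x)) t (1, 0) rfl
          ((hasDerivAt_id t).prodMk (hasDerivAt_const t x))
      show deriv (fun s => pdt u s x) t = _
      rw [hev.deriv_eq, hd.deriv]
    have e2 : pdx (pdx u) t x = fderiv ℝ φ (t, x) (0, 1) (0, 1) := by
      have hev : (fun y => pdx u t y) =ᶠ[𝓝 x] (fun y => φ (t, y) (0, 1)) := by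
        filter_upwards [hO2] with y hy
        exact hpdx_eq t y hy
      have hd : HasDerivAt (fun y => φ (t, y) (0, 1)) (fderiv ℝ φ (t, x) (0, 1) (0, 1)) x :=
        hkey (t, x) hz (0, 1) (fun y => (t, y)) x (0, 1) rfl
          ((hasDerivAt_const x t).prodMk (hasDerivAt_id x))
      show deriv (fun y => pdx u t y) x = _
      rw [hev.deriv_eq, hd.deriv]
    have hw := hwave t ⟨hz.1.1.le, hz.1.2.le⟩ x ⟨hz.2.1.le, hz.2.2.le⟩
    rw [e1, e2] at hw
    exact hw
  -- zero derivative along characteristic lines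
  have hderiv0 : ∀ σ : ℝ, σ * σ = 1 → ∀ c s : ℝ, (s, c - σ * s) ∈ O →
      HasDerivAt (fun r => φ (r, c - σ * r) (1, σ)) 0 s := by
    intro σ hσ c s hz
    have hγ : HasDerivAt (fun r : ℝ => ((r, c - σ * r) : ℝ × ℝ)) ((1 : ℝ), -σ) s := by
      refine (hasDerivAt_id s).prodMk ?_
      have h := ((hasDerivAt_id s).const_mul σ).const_sub c
      simpa using h
    have hd := hkey (s, c - σ * s) hz (1, σ) _ s ((1 : ℝ), -σ) rfl hγ
    have hzero : fderiv ℝ φ (s, c - σ * s) (1, -σ) (1, σ) = 0 := by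
      have h4 := hwave' s (c - σ * s) hz
      have h5 := hsymm (s, c - σ * s) hz (1, 0) (0, 1)
      have ev : ((1:ℝ), -σ) = ((1:ℝ), (0:ℝ)) - σ • ((0:ℝ), (1:ℝ)) := by
        simp [Prod.ext_iff]
      have ew : ((1:ℝ), σ) = ((1:ℝ), (0:ℝ)) + σ • ((0:ℝ), (1:ℝ)) := by
        simp [Prod.ext_iff]
      rw [ev, ew, map_sub, _root_.map_smul]
      simp only [ContinuousLinearMap.sub_apply, ContinuousLinearMap.smul_apply, map_add,
        _root_.map_smul, smul_eq_mul]
      linear_combination h4 + σ * h5 - ((fderiv ℝ φ (s, c - σ * s)) (0, 1)) (0, 1) * hσ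
    rw [hzero] at hd
    exact hd
  -- transport along characteristics
  have trans1 : ∀ c t₀ t₁ : ℝ, (t₀, c - t₀) ∈ O → (t₁, c - t₁) ∈ O →
      φ (t₁, c - t₁) (1, 1) = φ (t₀, c - t₀) (1, 1) := by
    have base : ∀ c t₀ t₁ : ℝ, t₀ ≤ t₁ → (t₀, c - t₀) ∈ O → (t₁, c - t₁) ∈ O →
        φ (t₁, c - t₁) (1, 1) = φ (t₀, c - t₀) (1, 1) := by
      intro c t₀ t₁ h01 h0 h1
      refine const_of_deriv0 (f := fun r => φ (r, c - r) (1, 1)) h01 ?_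
      intro s hs
      have a1 : 0 < t₀ := h0.1.1
      have a2 : t₀ < T := h0.1.2
      have b1 : -1 < c - t₀ := h0.2.1
      have b2 : c - t₀ < 1 := h0.2.2
      have a3 : 0 < t₁ := h1.1.1
      have a4 : t₁ < T := h1.1.2
      have b3 : -1 < c - t₁ := h1.2.1
      have b4 : c - t₁ < 1 := h1.2.2
      have hz : (s, c - s) ∈ O := hmemO _ _ (by linarith [hs.1]) (by linarith [hs.2])
        (by linarith [hs.2]) (by linarith [hs.1])
      have h := hderiv0 1 (by norm_num) c s (by simpa using hz)
      simpa using h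
    intro c t₀ t₁ h0 h1
    rcases le_total t₀ t₁ with h | h
    · exact base c t₀ t₁ h h0 h1
    · exact (base c t₁ t₀ h h1 h0).symm
  have trans2 : ∀ c t₀ t₁ : ℝ, (t₀, c + t₀) ∈ O → (t₁, c + t₁) ∈ O →
      φ (t₁, c + t₁) (1, -1) = φ (t₀, c + t₀) (1, -1) := by
    have base : ∀ c t₀ t₁ : ℝ, t₀ ≤ t₁ → (t₀, c + t₀) ∈ O → (t₁, c + t₁) ∈ O →
        φ (t₁, c + t₁) (1, -1) = φ (t₀, c + t₀) (1, -1) := by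
      intro c t₀ t₁ h01 h0 h1
      refine const_of_deriv0 (f := fun r => φ (r, c + r) (1, -1)) h01 ?_
      intro s hs
      have a1 : 0 < t₀ := h0.1.1
      have a2 : t₀ < T := h0.1.2
      have b1 : -1 < c + t₀ := h0.2.1
      have b2 : c + t₀ < 1 := h0.2.2
      have a3 : 0 < t₁ := h1.1.1
      have a4 : t₁ < T := h1.1.2
      have b3 : -1 < c + t₁ := h1.2.1
      have b4 : c + t₁ < 1 := h1.2.2
      have hz : (s, c + s) ∈ O := hmemO _ _ (by linarith [hs.1]) (by linarith [hs.2])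
        (by linarith [hs.1]) (by linarith [hs.2])
      have h := hderiv0 (-1) (by norm_num) c s (by simpa [sub_neg_eq_add] using hz)
      simpa [sub_neg_eq_add] using h
    intro c t₀ t₁ h0 h1
    rcases le_total t₀ t₁ with h | h
    · exact base c t₀ t₁ h h0 h1
    · exact (base c t₁ t₀ h h1 h0).symm
  -- u vanishes on the observation strips
  have hstrip : ∀ t x : ℝ, 0 < t → t < T →
      x ∈ Set.Ioo (-1:ℝ) (-3/4) ∪ Set.Ioo (3/4:ℝ) 1 → u t x = 0 := by
    intro t x ht htT hx
    have hx1 : -1 < x ∧ x < 1 := by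
      rcases hx with h | h
      · exact ⟨h.1, by linarith [h.2]⟩
      · exact ⟨by linarith [h.1], h.2⟩
    have hu0 : u 0 x = 0 := by
      rcases hx with h | h
      · have h1 := h.1; have h2 := h.2
        exact (hsupp x (by rw [abs_of_neg (by linarith)]; linarith)
          (by rw [abs_of_neg (by linarith)]; linarith)).1
      · have h1 := h.1; have h2 := h.2
        exact (hsupp x (by rw [abs_of_pos (by linarith)]; linarith)
          (by rw [abs_of_pos (by linarith)]; linarith)).1
    have hcont : ContinuousWithinAt (fun s => u s x) (Set.Icc 0 T) 0 := by
      have hmap : Set.MapsTo (fun s : ℝ => ((s, x) : ℝ × ℝ)) (Set.Icc 0 T) R :=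
        fun s hs => ⟨hs, ⟨hx1.1.le, hx1.2.le⟩⟩
      exact ContinuousWithinAt.comp (f := fun s : ℝ => ((s, x) : ℝ × ℝ))
        (hreg.continuousOn ((0:ℝ), x) ⟨⟨le_refl 0, hT0.le⟩, ⟨hx1.1.le, hx1.2.le⟩⟩)
        ((continuous_id.prodMk continuous_const).continuousWithinAt) hmap
    have hc2 : ∀ s ∈ Set.Ioo (0:ℝ) t, u s x = u t x := by
      intro s hs
      refine (const_of_deriv0 (f := fun r => u r x) hs.2.le ?_).symm
      intro r hr
      have hz : (r, x) ∈ O := hmemO r x (by linarith [hs.1, hr.1]) (by linarith [hr.2])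
        hx1.1 hx1.2
      have hD := hpdtD r x hz
      have hzero : φ (r, x) (1, 0) = 0 := by
        rw [← hpdt_eq r x hz]
        exact hobs r ⟨by linarith [hs.1, hr.1], by linarith [hr.2]⟩ x hx
      rw [← hzero]
      exact hD
    have hlim := lim_right (f := fun s => u s x) (s := Set.Icc 0 T) ht
      (fun s hs => ⟨hs.1.le, by linarith [hs.2]⟩) hcont hc2
    rw [← hlim]
    exact hu0
  -- hence φ vanishes on the open strips
  have hstripφ : ∀ t x : ℝ, 0 < t → t < T →
      x ∈ Set.Ioo (-1:ℝ) (-3/4) ∪ Set.Ioo (3/4:ℝ) 1 → φ (t, x) = 0 := by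
    intro t x ht htT hx
    have hΩ : IsOpen (Set.Ioo (0:ℝ) T ×ˢ (Set.Ioo (-1:ℝ) (-3/4) ∪ Set.Ioo (3/4:ℝ) 1)) :=
      isOpen_Ioo.prod (isOpen_Ioo.union isOpen_Ioo)
    have hev : Function.uncurry u =ᶠ[𝓝 ((t, x) : ℝ × ℝ)] (fun _ => (0:ℝ)) := by
      filter_upwards [hΩ.mem_nhds ⟨⟨ht, htT⟩, hx⟩] with z hz
      exact hstrip z.1 z.2 hz.1.1 hz.1.2 hz.2
    rw [hφ]
    rw [hev.fderiv_eq]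
    exact fderiv_const_apply 0
  -- properties of the within-derivative
  have hRuniq : UniqueDiffOn ℝ R := (uniqueDiffOn_Icc hT0).prod (uniqueDiffOn_Icc (by norm_num))
  have hψcont : ContinuousOn ψ R := hreg.continuousOn_fderivWithin hRuniq (by norm_num)
  have hψφ : ∀ z ∈ O, ψ z = φ z := fun z hz => fderivWithin_of_mem_nhds (hnhds z hz)
  -- spatial derivative vanishes at time 0 outside the support
  have hbdx : ∀ c : ℝ, (1/4 < c ∧ c < 1) ∨ (-1 < c ∧ c < -1/4) → ψ (0, c) (0, 1) = 0 := by
    have key : ∀ a b c : ℝ, a < b → -1 ≤ a → b ≤ 1 → c ∈ Set.Ioo a b →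
        (∀ y, a ≤ y → y ≤ b → u 0 y = 0) → ψ (0, c) (0, 1) = 0 := by
      intro a b c hab ha hb hcab hu0
      have hmemR : ((0:ℝ), c) ∈ R :=
        ⟨⟨le_refl 0, hT0.le⟩, ⟨by linarith [hcab.1], by linarith [hcab.2]⟩⟩
      have hFd : HasFDerivWithinAt (Function.uncurry u) (ψ (0, c)) R ((0:ℝ), c) :=
        ((hreg.differentiableOn (by norm_num)) _ hmemR).hasFDerivWithinAt
      have hι : HasDerivWithinAt (fun y : ℝ => (((0:ℝ), y) : ℝ × ℝ)) ((0:ℝ), (1:ℝ))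
          (Set.Icc a b) c :=
        ((hasDerivAt_const c (0:ℝ)).prodMk (hasDerivAt_id c)).hasDerivWithinAt
      have hmap : Set.MapsTo (fun y : ℝ => (((0:ℝ), y) : ℝ × ℝ)) (Set.Icc a b) R :=
        fun y hy => ⟨⟨le_refl 0, hT0.le⟩, ⟨by linarith [hy.1], by linarith [hy.2]⟩⟩
      have h1 : HasDerivWithinAt (fun y => u 0 y) (ψ (0, c) (0, 1)) (Set.Icc a b) c :=
        hFd.comp_hasDerivWithinAt c hι hmap
      have h2 : HasDerivWithinAt (fun y => u 0 y) 0 (Set.Icc a b) c := by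
        refine (hasDerivWithinAt_const c _ (0:ℝ)).congr ?_ ?_
        · intro y hy; exact hu0 y hy.1 hy.2
        · exact hu0 c hcab.1.le hcab.2.le
      have huniq : UniqueDiffWithinAt ℝ (Set.Icc a b) c :=
        uniqueDiffOn_Icc hab c ⟨hcab.1.le, hcab.2.le⟩
      rw [← h1.derivWithin huniq, h2.derivWithin huniq]
    intro c hc
    rcases hc with ⟨h1, h2⟩ | ⟨h1, h2⟩
    · refine key (1/4) 1 c (by norm_num) (by norm_num) (by norm_num) ⟨h1, h2⟩ ?_
      intro y hy1 hy2
      exact (hsupp y (by rw [abs_of_pos (by linarith)]; linarith)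
        (by rw [abs_of_pos (by linarith)]; linarith)).1
    · refine key (-1) (-1/4) c (by norm_num) (by norm_num) (by norm_num) ⟨h1, h2⟩ ?_
      intro y hy1 hy2
      exact (hsupp y (by rw [abs_of_neg (by linarith)]; linarith)
        (by rw [abs_of_neg (by linarith)]; linarith)).1
  -- limit of φ-values along lines hitting the bottom boundary
  have limφ : ∀ (c d σ' K δ : ℝ), 0 < δ → δ ≤ T →
      (∀ s ∈ Set.Icc (0:ℝ) δ, c + d * s ∈ Set.Icc (-1:ℝ) 1) →
      (∀ s ∈ Set.Ioo (0:ℝ) δ, (s, c + d * s) ∈ O ∧ φ (s, c + d * s) ((1:ℝ), σ') = K) →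
      ψ (0, c) ((1:ℝ), σ') = K := by
    intro c d σ' K δ hδ hδT hmap hcon
    have hc0 : c ∈ Set.Icc (-1:ℝ) 1 := by
      have h := hmap 0 ⟨le_refl 0, hδ.le⟩
      simpa using h
    have hmemR : ((0:ℝ), c) ∈ R := ⟨⟨le_refl 0, hT0.le⟩, hc0⟩
    have hρ : ContinuousWithinAt (fun s : ℝ => ψ (s, c + d * s) ((1:ℝ), σ')) (Set.Icc 0 δ) 0 := by
      have hρc : ContinuousWithinAt (fun s : ℝ => ((s, c + d * s) : ℝ × ℝ)) (Set.Icc 0 δ) 0 :=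
        (continuous_id.prodMk (continuous_const.add
          (continuous_const.mul continuous_id))).continuousWithinAt
      have hm : Set.MapsTo (fun s : ℝ => ((s, c + d * s) : ℝ × ℝ)) (Set.Icc 0 δ) R :=
        fun s hs => ⟨⟨hs.1, le_trans hs.2 hδT⟩, hmap s hs⟩
      have h0 : ContinuousWithinAt ψ R ((0:ℝ), c + d * 0) := by
        simpa using hψcont _ hmemR
      have hcomp := ContinuousWithinAt.comp (f := fun s : ℝ => ((s, c + d * s) : ℝ × ℝ)) h0 hρc hm
      exact ((ContinuousLinearMap.apply ℝ ℝ ((1:ℝ), σ')).continuous.continuousAt).comp_continuousWithinAt hcomp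
    have hconst : ∀ s ∈ Set.Ioo (0:ℝ) δ, ψ (s, c + d * s) ((1:ℝ), σ') = K := by
      intro s hs
      rw [hψφ _ (hcon s hs).1]
      exact (hcon s hs).2
    have := lim_right (f := fun s => ψ (s, c + d * s) ((1:ℝ), σ')) (s := Set.Icc 0 δ) hδ
      Set.Ioo_subset_Icc_self hρ hconst
    simpa using this
  -- φ(·)(1,1) vanishes on O (transport along lines x + t = c)
  have hlineP : ∀ t x : ℝ, (t, x) ∈ O → φ (t, x) (1, 1) = 0 := by
    intro t x hz
    have ht0 : 0 < t := hz.1.1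
    have htT : t < T := hz.1.2
    have hx0 : -1 < x := hz.2.1
    have hx1 : x < 1 := hz.2.2
    set c := t + x with hc
    have hxc : x = c - t := by rw [hc]; ring
    have hzt : (t, c - t) ∈ O := by rw [← hxc]; exact hz
    rcases lt_or_ge c (T - 3/4) with hc1 | hc1
    · -- transport to the left observation strip
      have h1 : max (-1 : ℝ) (c - T) < min (-3/4 : ℝ) c := by
        apply max_lt <;> apply lt_min <;> linarith
      set y := (max (-1 : ℝ) (c - T) + min (-3/4 : ℝ) c) / 2 with hy
      have hy1 : max (-1 : ℝ) (c - T) < y := by rw [hy]; linarith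
      have hy2 : y < min (-3/4 : ℝ) c := by rw [hy]; linarith
      have hyl : -1 < y := lt_of_le_of_lt (le_max_left _ _) hy1
      have hyu : y < -3/4 := lt_of_lt_of_le hy2 (min_le_left _ _)
      have hyc : y < c := lt_of_lt_of_le hy2 (min_le_right _ _)
      have hyT : c - T < y := lt_of_le_of_lt (le_max_right _ _) hy1
      have hey : c - (c - y) = y := by ring
      have hzs : (c - y, c - (c - y)) ∈ O := by
        rw [hey]; exact hmemO _ _ (by linarith) (by linarith) hyl (by linarith)
      have hres := trans1 c (c - y) t hzs hzt
      rw [← hxc] at hres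
      rw [hres]
      have h0 : φ (c - y, c - (c - y)) = 0 := by
        rw [hey]
        exact hstripφ (c - y) y (by linarith) (by linarith) (Or.inl ⟨hyl, hyu⟩)
      rw [h0]; simp
    rcases le_or_gt c (3/4) with hc2 | hc2
    · -- limit at the bottom boundary point (0, c), 1/4 < c ≤ 3/4
      have hc14 : 1/4 < c := by linarith
      set δ := min t (1/2) with hδ
      have hδ0 : 0 < δ := lt_min ht0 (by norm_num)
      have hδt : δ ≤ t := min_le_left _ _
      have hδh : δ ≤ 1/2 := min_le_right _ _
      have hK : ψ (0, c) ((1:ℝ), 1) = φ (t, x) (1, 1) := by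
        apply limφ c (-1) 1 (φ (t, x) (1, 1)) δ hδ0 (by linarith)
        · intro s hs
          exact ⟨by linarith [hs.1, hs.2], by linarith [hs.1, hs.2]⟩
        · intro s hs
          rw [show c + (-1) * s = c - s from by ring]
          have hzs : (s, c - s) ∈ O := hmemO _ _ hs.1 (by linarith [hs.2])
            (by linarith [hs.2]) (by linarith [hs.1])
          refine ⟨hzs, ?_⟩
          have hres := trans1 c t s hzt hzs
          rw [← hxc] at hres
          exact hres
      have hQ : ψ (0, c) ((1:ℝ), -1) = 0 := by
        apply limφ c 1 (-1) 0 (1/8) (by norm_num) (by linarith)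
        · intro s hs
          exact ⟨by linarith [hs.1, hs.2], by linarith [hs.1, hs.2]⟩
        · intro s hs
          rw [show c + 1 * s = c + s from by ring]
          have hzs : (s, c + s) ∈ O := hmemO _ _ hs.1 (by linarith [hs.2])
            (by linarith [hs.1]) (by linarith [hs.2])
          refine ⟨hzs, ?_⟩
          have he : c + (7/8 - c) = 7/8 := by ring
          have hzstar : (7/8 - c, c + (7/8 - c)) ∈ O := by
            rw [he]; exact hmemO _ _ (by linarith) (by linarith) (by norm_num) (by norm_num)
          have hres := trans2 c (7/8 - c) s hzstar hzs
          rw [hres]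
          have h0 : φ (7/8 - c, c + (7/8 - c)) = 0 := by
            rw [he]
            exact hstripφ _ _ (by linarith) (by linarith) (Or.inr ⟨by norm_num, by norm_num⟩)
          rw [h0]; simp
      have hX : ψ (0, c) (0, 1) = 0 := hbdx c (Or.inl ⟨hc14, by linarith⟩)
      have hid : ((1:ℝ), (1:ℝ)) = ((1:ℝ), (-1:ℝ)) + (2:ℝ) • ((0:ℝ), (1:ℝ)) := by
        norm_num [Prod.ext_iff]
      rw [← hK, hid, map_add, _root_.map_smul, hQ, hX]
      simp
    · -- transport to the right observation strip
      have h1 : max (3/4 : ℝ) (c - T) < min 1 c := by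
        apply max_lt <;> apply lt_min <;> linarith
      set y := (max (3/4 : ℝ) (c - T) + min 1 c) / 2 with hy
      have hy1 : max (3/4 : ℝ) (c - T) < y := by rw [hy]; linarith
      have hy2 : y < min 1 c := by rw [hy]; linarith
      have hyl : 3/4 < y := lt_of_le_of_lt (le_max_left _ _) hy1
      have hyu : y < 1 := lt_of_lt_of_le hy2 (min_le_left _ _)
      have hyc : y < c := lt_of_lt_of_le hy2 (min_le_right _ _)
      have hyT : c - T < y := lt_of_le_of_lt (le_max_right _ _) hy1
      have hey : c - (c - y) = y := by ring
      have hzs : (c - y, c - (c - y)) ∈ O := by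
        rw [hey]; exact hmemO _ _ (by linarith) (by linarith) (by linarith) hyu
      have hres := trans1 c (c - y) t hzs hzt
      rw [← hxc] at hres
      rw [hres]
      have h0 : φ (c - y, c - (c - y)) = 0 := by
        rw [hey]
        exact hstripφ (c - y) y (by linarith) (by linarith) (Or.inr ⟨hyl, hyu⟩)
      rw [h0]; simp
  -- φ(·)(1,-1) vanishes on O (transport along lines x - t = c)
  have hlineQ : ∀ t x : ℝ, (t, x) ∈ O → φ (t, x) (1, -1) = 0 := by
    intro t x hz
    have ht0 : 0 < t := hz.1.1
    have htT : t < T := hz.1.2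
    have hx0 : -1 < x := hz.2.1
    have hx1 : x < 1 := hz.2.2
    set c := x - t with hc
    have hxc : x = c + t := by rw [hc]; ring
    have hzt : (t, c + t) ∈ O := by rw [← hxc]; exact hz
    rcases lt_or_ge c (-3/4) with hc1 | hc1
    · -- transport to the left observation strip
      have h1 : max (-1 : ℝ) c < min (-3/4 : ℝ) (c + T) := by
        apply max_lt <;> apply lt_min <;> linarith
      set y := (max (-1 : ℝ) c + min (-3/4 : ℝ) (c + T)) / 2 with hy
      have hy1 : max (-1 : ℝ) c < y := by rw [hy]; linarith
      have hy2 : y < min (-3/4 : ℝ) (c + T) := by rw [hy]; linarith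
      have hyl : -1 < y := lt_of_le_of_lt (le_max_left _ _) hy1
      have hyu : y < -3/4 := lt_of_lt_of_le hy2 (min_le_left _ _)
      have hyc : c < y := lt_of_le_of_lt (le_max_right _ _) hy1
      have hyT : y < c + T := lt_of_lt_of_le hy2 (min_le_right _ _)
      have hey : c + (y - c) = y := by ring
      have hzs : (y - c, c + (y - c)) ∈ O := by
        rw [hey]; exact hmemO _ _ (by linarith) (by linarith) hyl (by linarith)
      have hres := trans2 c (y - c) t hzs hzt
      rw [← hxc] at hres
      rw [hres]
      have h0 : φ (y - c, c + (y - c)) = 0 := by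
        rw [hey]
        exact hstripφ (y - c) y (by linarith) (by linarith) (Or.inl ⟨hyl, hyu⟩)
      rw [h0]; simp
    rcases lt_or_ge (3/4 - T) c with hc2 | hc2
    · -- transport to the right observation strip
      have h1 : max (3/4 : ℝ) c < min 1 (c + T) := by
        apply max_lt <;> apply lt_min <;> linarith
      set y := (max (3/4 : ℝ) c + min 1 (c + T)) / 2 with hy
      have hy1 : max (3/4 : ℝ) c < y := by rw [hy]; linarith
      have hy2 : y < min 1 (c + T) := by rw [hy]; linarith
      have hyl : 3/4 < y := lt_of_le_of_lt (le_max_left _ _) hy1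
      have hyu : y < 1 := lt_of_lt_of_le hy2 (min_le_left _ _)
      have hyc : c < y := lt_of_le_of_lt (le_max_right _ _) hy1
      have hyT : y < c + T := lt_of_lt_of_le hy2 (min_le_right _ _)
      have hey : c + (y - c) = y := by ring
      have hzs : (y - c, c + (y - c)) ∈ O := by
        rw [hey]; exact hmemO _ _ (by linarith) (by linarith) (by linarith) hyu
      have hres := trans2 c (y - c) t hzs hzt
      rw [← hxc] at hres
      rw [hres]
      have h0 : φ (y - c, c + (y - c)) = 0 := by
        rw [hey]
        exact hstripφ (y - c) y (by linarith) (by linarith) (Or.inr ⟨hyl, hyu⟩)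
      rw [h0]; simp
    · -- limit at the bottom boundary point (0, c), -3/4 ≤ c ≤ 3/4 - T < -1/4
      have hcm : c < -1/4 := by linarith
      set δ := min t (1/2) with hδ
      have hδ0 : 0 < δ := lt_min ht0 (by norm_num)
      have hδt : δ ≤ t := min_le_left _ _
      have hδh : δ ≤ 1/2 := min_le_right _ _
      have hK : ψ (0, c) ((1:ℝ), -1) = φ (t, x) (1, -1) := by
        apply limφ c 1 (-1) (φ (t, x) (1, -1)) δ hδ0 (by linarith)
        · intro s hs
          exact ⟨by linarith [hs.1, hs.2], by linarith [hs.1, hs.2]⟩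
        · intro s hs
          rw [show c + 1 * s = c + s from by ring]
          have hzs : (s, c + s) ∈ O := hmemO _ _ hs.1 (by linarith [hs.2])
            (by linarith [hs.1]) (by linarith [hs.2])
          refine ⟨hzs, ?_⟩
          have hres := trans2 c t s hzt hzs
          rw [← hxc] at hres
          exact hres
      have hQ : ψ (0, c) ((1:ℝ), 1) = 0 := by
        apply limφ c (-1) 1 0 (1/8) (by norm_num) (by linarith)
        · intro s hs
          exact ⟨by linarith [hs.1, hs.2], by linarith [hs.1, hs.2]⟩
        · intro s hs
          rw [show c + (-1) * s = c - s from by ring]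
          have hzs : (s, c - s) ∈ O := hmemO _ _ hs.1 (by linarith [hs.2])
            (by linarith [hs.2]) (by linarith [hs.1])
          refine ⟨hzs, ?_⟩
          have he : c - (c + 7/8) = -(7/8) := by ring
          have hzstar : (c + 7/8, c - (c + 7/8)) ∈ O := by
            rw [he]; exact hmemO _ _ (by linarith) (by linarith) (by norm_num) (by norm_num)
          have hres := trans1 c (c + 7/8) s hzstar hzs
          rw [hres]
          have h0 : φ (c + 7/8, c - (c + 7/8)) = 0 := by
            rw [he]
            exact hstripφ _ _ (by linarith) (by linarith) (Or.inl ⟨by norm_num, by norm_num⟩)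
          rw [h0]; simp
      have hX : ψ (0, c) (0, 1) = 0 := hbdx c (Or.inr ⟨by linarith, hcm⟩)
      have hid : ((1:ℝ), (-1:ℝ)) = ((1:ℝ), (1:ℝ)) - (2:ℝ) • ((0:ℝ), (1:ℝ)) := by
        norm_num [Prod.ext_iff]
      rw [← hK, hid, map_sub, _root_.map_smul, hQ, hX]
      simp
  -- the spatial derivative vanishes on O
  have hpdx0 : ∀ t x : ℝ, (t, x) ∈ O → φ (t, x) (0, 1) = 0 := by
    intro t x hz
    have h1 := hlineP t x hz
    have h2 := hlineQ t x hz
    have hid : ((0:ℝ), (1:ℝ)) = (2:ℝ)⁻¹ • (((1:ℝ), (1:ℝ)) - ((1:ℝ), (-1:ℝ))) := by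
      norm_num [Prod.ext_iff]
    rw [hid, _root_.map_smul, map_sub, h1, h2]
    simp
  -- u vanishes for interior times
  have hu1 : ∀ t, 0 < t → t < T → ∀ x ∈ Set.Icc (-1:ℝ) 1, u t x = 0 := by
    intro t ht0 htT x hx
    rcases eq_or_lt_of_le hx.1 with h | hxl
    · rw [← h]; exact (hbdry t ⟨ht0.le, htT.le⟩).1
    rcases eq_or_lt_of_le hx.2 with h | hxr
    · rw [h]; exact (hbdry t ⟨ht0.le, htT.le⟩).2
    have hcont : ContinuousWithinAt (fun y => u t y) (Set.Icc (-1:ℝ) 1) (-1) := by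
      have hmap : Set.MapsTo (fun y : ℝ => ((t, y) : ℝ × ℝ)) (Set.Icc (-1:ℝ) 1) R :=
        fun y hy => ⟨⟨ht0.le, htT.le⟩, hy⟩
      exact ContinuousWithinAt.comp (f := fun y : ℝ => ((t, y) : ℝ × ℝ))
        (hreg.continuousOn (t, -1) ⟨⟨ht0.le, htT.le⟩, ⟨le_refl _, by norm_num⟩⟩)
        ((continuous_const.prodMk continuous_id).continuousWithinAt) hmap
    have hconst : ∀ y ∈ Set.Ioo (-1:ℝ) x, u t y = u t x := by
      intro y hy
      refine (const_of_deriv0 (f := fun r => u t r) hy.2.le ?_).symm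
      intro r hr
      have hz : (t, r) ∈ O := hmemO t r ht0 htT (by linarith [hy.1, hr.1]) (by linarith [hr.2])
      have hD := hpdxD t r hz
      rw [hpdx0 t r hz] at hD
      exact hD
    have hlim := lim_right (f := fun y => u t y) (s := Set.Icc (-1:ℝ) 1) hxl
      (fun y hy => ⟨hy.1.le, by linarith [hy.2]⟩) hcont hconst
    rw [← hlim]
    exact (hbdry t ⟨ht0.le, htT.le⟩).1
  -- conclusion
  intro t ht x hx
  have hcont : ∀ s ∈ Set.Icc (0:ℝ) T, ContinuousWithinAt (fun r => u r x) (Set.Icc 0 T) s := by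
    intro s hs
    have hmap : Set.MapsTo (fun r : ℝ => ((r, x) : ℝ × ℝ)) (Set.Icc 0 T) R :=
      fun r hr => ⟨hr, hx⟩
    exact ContinuousWithinAt.comp (f := fun r : ℝ => ((r, x) : ℝ × ℝ))
      (hreg.continuousOn (s, x) ⟨hs, hx⟩)
      ((continuous_id.prodMk continuous_const).continuousWithinAt) hmap
  rcases eq_or_lt_of_le ht.1 with h0 | h0
  · have hlim := lim_right (f := fun s => u s x) (s := Set.Icc 0 T) hT0
      (fun s hs => ⟨hs.1.le, hs.2.le⟩) (hcont 0 ⟨le_refl 0, hT0.le⟩)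
      (fun s hs => hu1 s hs.1 hs.2 x hx)
    rw [← h0]
    exact hlim
  rcases eq_or_lt_of_le ht.2 with h1 | h1
  · have hlim := lim_left (f := fun s => u s x) (s := Set.Icc 0 T) hT0
      (fun s hs => ⟨hs.1.le, hs.2.le⟩) (hcont T ⟨hT0.le, le_refl T⟩)
      (fun s hs => hu1 s hs.1 hs.2 x hx)
    rw [h1]
    exact hlim
  · exact hu1 t h0 h1 x hx
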